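/- Let q be an even positive integer, let N ∈ ℕ, and let M := binom(N+q−1, q) = (N+q−1)!/(q!·(N−1)!). Let (Ω, μ) be a measure space with μ a probability measure, and let X_N be an N-dimensional subspace of the real vector space of measurable functions f : Ω → ℝ satisfying ∫_Ω |f|^q dμ < ∞. Then there exist points ξ^1, …, ξ^M ∈ Ω and real numbers λ_1, …, λ_M such that ∫_Ω |f|^q dμ = Σ_{j=1}^M λ_j |f(ξ^j)|^q for every f ∈ X_N. -/

import Mathlib

open MeasureTheory

/-- **Exact weighted discretization for general subspaces** (Theorem gfT1).
Let `q` be an even positive integer, `N ∈ ℕ`, and `M := (N+q-1).choose q`.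
For every `N`-dimensional real subspace `X` of `L_q(Ω,μ)` (μ a probability measure)
there exist `M` nodes and real weights giving exact discretization of the `L_q`-norm. -/
theorem exact_weighted_discretization_general
    {Ω : Type*} [MeasurableSpace Ω] (μ : Measure Ω) [IsProbabilityMeasure μ]
    (q N : ℕ) (hq0 : 0 < q) (hqe : Even q) (hN : 0 < N)
    (X : Submodule ℝ (Ω → ℝ)) (hdim : Module.finrank ℝ X = N)
    (hint : ∀ f ∈ X, Integrable (fun x => |f x| ^ q) μ) :
    ∃ (ξ : Fin ((N + q - 1).choose q) → Ω) (lam : Fin ((N + q - 1).choose q) → ℝ),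
      ∀ f ∈ X, ∫ x, |f x| ^ q ∂μ = ∑ j, lam j * |f (ξ j)| ^ q := by
  classical
  set M := (N + q - 1).choose q with hMdef
  -- Ω is nonempty
  have hΩ : Nonempty Ω := by
    by_contra h
    rw [not_nonempty_iff] at h
    have h1 : μ Set.univ = 1 := measure_univ
    rw [Set.univ_eq_empty_iff.2 h, measure_empty] at h1
    exact zero_ne_one h1
  have habs : ∀ t : ℝ, |t| ^ q = t ^ q := fun t => hqe.pow_abs t
  haveI : FiniteDimensional ℝ X := FiniteDimensional.of_finrank_pos (hdim ▸ hN)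
  let bX : Module.Basis (Fin N) ℝ X := Module.finBasisOfFinrankEq ℝ X hdim
  let b : Fin N → Ω → ℝ := fun i => ((bX i : X) : Ω → ℝ)
  let m : Sym (Fin N) q → Ω → ℝ := fun k x => (k.val.map fun i => b i x).prod
  let S : Submodule ℝ (Ω → ℝ) := Submodule.span ℝ (Set.range m)
  -- q-th powers lie in S
  have hfS : ∀ f ∈ X, (fun x => f x ^ q) ∈ S := by
    intro f hf
    set c : Fin N → ℝ := fun i => bX.repr ⟨f, hf⟩ i with hc
    have hfx : ∀ x, f x = ∑ i, c i * b i x := by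
      intro x
      have h1 := bX.sum_repr ⟨f, hf⟩
      have h2 := congrFun (congrArg (Subtype.val) h1) x
      simpa [-Module.Basis.sum_repr] using h2.symm
    have key : (fun x => f x ^ q)
        = ∑ k ∈ Finset.univ.sym q, ((k.val.countPerms : ℝ) * (k.val.map c).prod) • m k := by
      funext x
      simp only [Finset.sum_apply, Pi.smul_apply, smul_eq_mul]
      rw [hfx x, Finset.sum_pow]
      refine Finset.sum_congr rfl fun k _ => ?_
      show (k.val.countPerms : ℝ) * (k.val.map fun i => c i * b i x).prod = _
      rw [show (fun i => c i * b i x) = (fun i => c i * (fun j => b j x) i) from rfl,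
        Multiset.prod_map_mul]
      ring
    rw [key]
    exact Submodule.sum_mem _ fun k _ =>
      Submodule.smul_mem _ _ (Submodule.subset_span ⟨k, rfl⟩)
  -- the span of q-th powers of elements of X
  let P : Set (Ω → ℝ) := {g | ∃ f ∈ X, g = fun x => f x ^ q}
  let V : Submodule ℝ (Ω → ℝ) := Submodule.span ℝ P
  have hVS : V ≤ S := by
    rw [Submodule.span_le]
    rintro g ⟨f, hf, rfl⟩
    exact hfS f hf
  haveI hSfin : FiniteDimensional ℝ S := FiniteDimensional.span_of_finite ℝ (Set.finite_range m)
  haveI hVfin : FiniteDimensional ℝ V := Submodule.finiteDimensional_of_le hVS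
  -- dimension bound
  have hdimV : Module.finrank ℝ V ≤ M := by
    have h1 : Module.finrank ℝ V ≤ Module.finrank ℝ S := Submodule.finrank_mono hVS
    have h2 : Module.finrank ℝ S ≤ Fintype.card (Sym (Fin N) q) := by
      classical
      have := finrank_span_le_card (R := ℝ) (Set.range m)
      refine this.trans ?_
      rw [Set.toFinset_card]
      exact Fintype.card_range_le m
    have h3 : Fintype.card (Sym (Fin N) q) = M := by
      rw [Sym.card_sym_eq_choose, Fintype.card_fin]
    exact h1.trans (h2.trans_eq h3)
  -- all elements of V are integrable
  have hVint : ∀ g ∈ V, Integrable g μ := by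
    intro g hg
    refine Submodule.span_induction ?_ ?_ ?_ ?_ hg
    · rintro g ⟨f, hf, rfl⟩
      have := hint f hf
      simpa only [habs] using this
    · exact integrable_zero _ _ _
    · intro g h _ _ hgi hhi
      exact hgi.add hhi
    · intro a g _ hgi
      exact hgi.smul a
  -- the integral as a linear functional on V
  let L : Module.Dual ℝ V :=
    { toFun := fun g => ∫ x, (g : Ω → ℝ) x ∂μ
      map_add' := fun g h => by
        simp only [Submodule.coe_add, Pi.add_apply]
        exact integral_add (hVint _ g.2) (hVint _ h.2)
      map_smul' := fun a g => by
        simp only [Submodule.coe_smul, Pi.smul_apply, smul_eq_mul, RingHom.id_apply]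
        exact integral_const_mul a _ }
  -- point evaluations
  let Φ : Ω → Module.Dual ℝ V := fun x => (LinearMap.proj x).comp V.subtype
  have hspan : Submodule.span ℝ (Set.range Φ) = ⊤ := by
    refine Submodule.span_eq_top_of_ne_zero ?_
    intro z hz
    by_contra! hcon
    apply hz
    have : (z : Ω → ℝ) = 0 := by
      funext x
      exact hcon (Φ x) ⟨x, rfl⟩
    exact Subtype.ext this
  obtain ⟨t, hts, htspan, htli⟩ := exists_linearIndependent ℝ (Set.range Φ)
  rw [hspan] at htspan
  have htfin : t.Finite := htli.setFinite
  let tF : Finset (Module.Dual ℝ V) := htfin.toFinset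
  have htF : (tF : Set (Module.Dual ℝ V)) = t := htfin.coe_toFinset
  have hcard : tF.card ≤ M := by
    have h1 : tF.card ≤ Module.finrank ℝ (Module.Dual ℝ V) := by
      refine LinearIndependent.finset_card_le_finrank ?_
      have htli' : LinearIndependent ℝ
          (fun x : (tF : Set (Module.Dual ℝ V)) => (x : Module.Dual ℝ V)) := by
        rw [htF]; exact htli
      exact htli' 
    rw [Subspace.dual_finrank_eq] at h1
    exact h1.trans hdimV
  -- represent L over tF
  have hLmem : L ∈ Submodule.span ℝ (tF : Set (Module.Dual ℝ V)) := by
    rw [htF, htspan]; trivial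
  obtain ⟨cf, -, hcf⟩ := Submodule.mem_span_finset.1 hLmem
  -- choose points
  have hpt : ∀ v ∈ tF, ∃ x : Ω, Φ x = v := by
    intro v hv
    have : v ∈ t := htF ▸ hv
    exact hts this
  let pt : Module.Dual ℝ V → Ω := fun v =>
    if h : ∃ x : Ω, Φ x = v then h.choose else Classical.arbitrary Ω
  have hptv : ∀ v ∈ tF, Φ (pt v) = v := by
    intro v hv
    obtain ⟨x, hx⟩ := hpt v hv
    have h : ∃ x : Ω, Φ x = v := ⟨x, hx⟩
    simp only [pt, dif_pos h]
    exact h.choose_spec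
  -- enumerate tF
  let e : Fin tF.card ≃ {v // v ∈ tF} := tF.equivFin.symm
  let ξ : Fin M → Ω := fun j =>
    if h : (j : ℕ) < tF.card then pt (e ⟨j, h⟩ : Module.Dual ℝ V) else Classical.arbitrary Ω
  let lam : Fin M → ℝ := fun j =>
    if h : (j : ℕ) < tF.card then cf (e ⟨j, h⟩ : Module.Dual ℝ V) else 0
  refine ⟨ξ, lam, ?_⟩
  intro f hf
  have hfV : (fun x => f x ^ q) ∈ V := Submodule.subset_span ⟨f, hf, rfl⟩
  set g : V := ⟨fun x => f x ^ q, hfV⟩ with hg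
  -- the sum over Fin M collapses to a sum over tF
  have hemb : Function.Injective (Fin.castLE hcard) := Fin.castLE_injective hcard
  have hsum : ∑ j : Fin M, lam j * f (ξ j) ^ q
      = ∑ v ∈ tF, cf v * f (pt v) ^ q := by
    have h1 : ∑ j ∈ (Finset.univ.map ⟨Fin.castLE hcard, hemb⟩), lam j * f (ξ j) ^ q
        = ∑ j : Fin M, lam j * f (ξ j) ^ q := by
      refine Finset.sum_subset (Finset.subset_univ _) ?_
      intro j _ hj
      have hjk : ¬ (j : ℕ) < tF.card := by
        intro hlt
        apply hj
        simp only [Finset.mem_map, Function.Embedding.coeFn_mk]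
        exact ⟨⟨(j : ℕ), hlt⟩, Finset.mem_univ _, by ext; rfl⟩
      simp only [lam, dif_neg hjk, zero_mul]
    rw [← h1, Finset.sum_map]
    simp only [Function.Embedding.coeFn_mk]
    have hterm : ∀ i : Fin tF.card, lam (Fin.castLE hcard i) * f (ξ (Fin.castLE hcard i)) ^ q
        = cf (e i : Module.Dual ℝ V) * f (pt (e i : Module.Dual ℝ V)) ^ q := by
      intro i
      have hi : ((Fin.castLE hcard i : Fin M) : ℕ) < tF.card := i.2
      have hii : (⟨((Fin.castLE hcard i : Fin M) : ℕ), hi⟩ : Fin tF.card) = i := by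
        ext; rfl
      simp only [lam, ξ, dif_pos hi, hii]
    rw [Finset.sum_congr rfl fun i _ => hterm i]
    rw [Equiv.sum_comp e
      (fun v : {v // v ∈ tF} => cf (v : Module.Dual ℝ V) * f (pt (v : Module.Dual ℝ V)) ^ q)]
    exact Finset.sum_coe_sort tF (fun v => cf v * f (pt v) ^ q)
  -- final computation
  have hLg : L g = ∑ v ∈ tF, cf v * f (pt v) ^ q := by
    rw [← hcf]
    rw [LinearMap.sum_apply]
    refine Finset.sum_congr rfl fun v hv => ?_
    rw [LinearMap.smul_apply, smul_eq_mul]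
    congr 1
    conv_lhs => rw [← hptv v hv]
    rfl
  have hint1 : ∫ x, |f x| ^ q ∂μ = L g := by
    simp only [L, LinearMap.coe_mk, AddHom.coe_mk]
    simp only [habs]
    rfl
  rw [hint1, hLg, hsum.symm]
  refine Finset.sum_congr rfl fun j _ => ?_
  rw [habs]
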